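/- Let r be a natural number. The number of phase-equivalence classes of elements of H(r+1) is at most (n²−n) times the number of phase-equivalence classes of elements of H(r), where H(r) is the set of matrices implementable by a circuit with exactly r CS-type gates. -/

import Mathlib

open Matrix

noncomputable section

/-- ω = exp(2πi/m). -/
def omega (m : ℕ) : ℂ := Complex.exp (2 * Real.pi * Complex.I / m)

/-- X_i : the permutation matrix of the map x ↦ Function.update x i (x i + 1). -/
def Xn (n : ℕ) (i : Fin n) : Matrix (Fin n → ZMod 2) (Fin n → ZMod 2) ℂ :=
  Matrix.of fun x y => if x = Function.update y i (y i + 1) then 1 else 0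

/-- T_i : the diagonal matrix whose (x,x) entry is ω^((x i).val). -/
def Tn (m n : ℕ) (i : Fin n) : Matrix (Fin n → ZMod 2) (Fin n → ZMod 2) ℂ :=
  Matrix.diagonal fun x => omega m ^ (x i).val

/-- CS_{i,j} : the diagonal matrix whose (x,x) entry is ω^(2·(x i).val·(x j).val). -/
def CSn (m n : ℕ) (i j : Fin n) : Matrix (Fin n → ZMod 2) (Fin n → ZMod 2) ℂ :=
  Matrix.diagonal fun x => omega m ^ (2 * (x i).val * (x j).val)

/-- CS_{i,j}⁻¹ : the diagonal matrix whose (x,x) entry is ω^(-2·(x i).val·(x j).val). -/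
def CSninv (m n : ℕ) (i j : Fin n) : Matrix (Fin n → ZMod 2) (Fin n → ZMod 2) ℂ :=
  Matrix.diagonal fun x => (omega m)⁻¹ ^ (2 * (x i).val * (x j).val)

/-- A gate of a CS-type circuit: some X_i, some power of some T_i, some CS_{i,j},
or some CS_{i,j}⁻¹ (with i ≠ j). -/
inductive GateCS (n : ℕ) where
  | X (i : Fin n)
  | Tpow (i : Fin n) (l : ℕ)
  | CS (i j : Fin n) (h : i ≠ j)
  | CSinv (i j : Fin n) (h : i ≠ j)

/-- The matrix of a gate. -/
def GateCS.toMatrix (m : ℕ) {n : ℕ} : GateCS n → Matrix (Fin n → ZMod 2) (Fin n → ZMod 2) ℂ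
  | .X i => Xn n i
  | .Tpow i l => Tn m n i ^ l
  | .CS i j _ => CSn m n i j
  | .CSinv i j _ => CSninv m n i j

/-- Whether a gate is a CS or CS⁻¹ gate. -/
def GateCS.isCS {n : ℕ} : GateCS n → Bool
  | .CS _ _ _ => true
  | .CSinv _ _ _ => true
  | _ => false

/-- H(r) : the set of matrices implementable by a circuit with exactly r CS-type gates. -/
def Hset (m n r : ℕ) : Set (Matrix (Fin n → ZMod 2) (Fin n → ZMod 2) ℂ) :=
  {U | ∃ L : List (GateCS n), (L.map (GateCS.toMatrix m)).prod = U ∧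
    L.countP (fun g => g.isCS) = r}

/-- Two matrices are phase-equivalent if they differ by a nonzero scalar. -/
def PhaseEq {α : Type*} (U V : Matrix α α ℂ) : Prop := ∃ c : ℂ, c ≠ 0 ∧ U = c • V

-- AUX (to be inserted before theorem)
lemma omega_ne_zero (m : ℕ) : omega m ≠ 0 := Complex.exp_ne_zero _

lemma omega_pow_m (m : ℕ) (hm : 0 < m) : omega m ^ m = 1 := by
  have hm' : (m:ℂ) ≠ 0 := by exact_mod_cast hm.ne'
  rw [omega, ← Complex.exp_nat_mul, mul_div_assoc', mul_div_cancel_left₀ _ hm']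
  exact Complex.exp_two_pi_mul_I

lemma zmod2_cases (a : ZMod 2) : a = 0 ∨ a = 1 := by revert a; decide

lemma zmod2_aai (a : ZMod 2) : a + 1 + 1 = a := by revert a; decide

lemma omega_pow_helper (m : ℕ) (hm : 0 < m) : omega m ^ (2*(m-1)) = (omega m ^ 2)⁻¹ := by
  have h : omega m ^ (2*(m-1)) * omega m ^ 2 = 1 := by
    rw [← pow_add]
    have h2 : 2*(m-1) + 2 = 2*m := by omega
    rw [h2, pow_mul', omega_pow_m m hm, one_pow]
  exact eq_inv_of_mul_eq_one_left h

lemma scalarA (m : ℕ) (hm : 0 < m) (a b : ZMod 2) :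
    omega m ^ (2 * (a+1).val * b.val)
      = (omega m)⁻¹ ^ (2 * a.val * b.val) * ((omega m ^ b.val) ^ 2) := by
  have hw := omega_ne_zero m
  rcases zmod2_cases a with rfl | rfl <;> rcases zmod2_cases b with rfl | rfl <;>
    simp only [show ((1:ZMod 2)+1) = 0 from by decide, show ((0:ZMod 2)+1) = 1 from by decide,
      show (0:ZMod 2).val = 0 from rfl, show (1:ZMod 2).val = 1 from rfl,
      mul_zero, mul_one, zero_mul, pow_zero, pow_one, one_pow, one_mul] <;>
    field_simp

lemma scalarB (m : ℕ) (hm : 0 < m) (a b : ZMod 2) :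
    (omega m)⁻¹ ^ (2 * (a+1).val * b.val)
      = omega m ^ (2 * a.val * b.val) * ((omega m ^ b.val) ^ (2*(m-1))) := by
  have hw := omega_ne_zero m
  rcases zmod2_cases a with rfl | rfl <;> rcases zmod2_cases b with rfl | rfl <;>
    simp only [show ((1:ZMod 2)+1) = 0 from by decide, show ((0:ZMod 2)+1) = 1 from by decide,
      show (0:ZMod 2).val = 0 from rfl, show (1:ZMod 2).val = 1 from rfl,
      mul_zero, mul_one, zero_mul, pow_zero, pow_one, one_pow, one_mul,
      omega_pow_helper m hm, inv_pow] <;>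
    field_simp

lemma flip_invol (n : ℕ) (k : Fin n) :
    Function.Involutive (fun x : Fin n → ZMod 2 => Function.update x k (x k + 1)) := by
  intro x
  simp only [Function.update_self, Function.update_idem, zmod2_aai, Function.update_eq_self]

lemma X_mul_diag {n : ℕ} (k : Fin n) (f : (Fin n → ZMod 2) → ℂ) :
    Xn n k * Matrix.diagonal f
      = Matrix.diagonal (fun x => f (Function.update x k (x k + 1))) * Xn n k := by
  ext x y
  rw [Matrix.mul_diagonal, Matrix.diagonal_mul]
  simp only [Xn, Matrix.of_apply]
  by_cases h : x = Function.update y k (y k + 1)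
  · have hy : Function.update x k (x k + 1) = y := by
      rw [h]; exact flip_invol n k y
    rw [if_pos h, hy, one_mul, mul_one]
  · rw [if_neg h, zero_mul, mul_zero]

lemma csn_symm (m n : ℕ) (i j : Fin n) : CSn m n i j = CSn m n j i := by
  unfold CSn; ext x y
  simp only [Matrix.diagonal_apply]
  rw [show 2 * (x i).val * (x j).val = 2 * (x j).val * (x i).val from by ring]

lemma csninv_symm (m n : ℕ) (i j : Fin n) : CSninv m n i j = CSninv m n j i := by
  unfold CSninv; ext x y
  simp only [Matrix.diagonal_apply]
  rw [show 2 * (x i).val * (x j).val = 2 * (x j).val * (x i).val from by ring]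

lemma X_comm_CSn {m n : ℕ} {k i j : Fin n} (hki : k ≠ i) (hkj : k ≠ j) :
    Xn n k * CSn m n i j = CSn m n i j * Xn n k := by
  rw [CSn, X_mul_diag]
  congr 1
  ext x y
  simp only [Matrix.diagonal_apply]
  split_ifs with h
  · rw [Function.update_of_ne hki.symm, Function.update_of_ne hkj.symm]
  · rfl

lemma X_comm_CSninv {m n : ℕ} {k i j : Fin n} (hki : k ≠ i) (hkj : k ≠ j) :
    Xn n k * CSninv m n i j = CSninv m n i j * Xn n k := by
  rw [CSninv, X_mul_diag]
  congr 1
  ext x y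
  simp only [Matrix.diagonal_apply]
  split_ifs with h
  · rw [Function.update_of_ne hki.symm, Function.update_of_ne hkj.symm]
  · rfl

lemma X_mul_CSn_self {m n : ℕ} (hm : 0 < m) {i j : Fin n} (hij : i ≠ j) :
    Xn n i * CSn m n i j = CSninv m n i j * (Tn m n j ^ 2 * Xn n i) := by
  rw [CSn, X_mul_diag, CSninv, Tn, Matrix.diagonal_pow, ← mul_assoc,
    Matrix.diagonal_mul_diagonal]
  congr 1
  ext x y
  simp only [Matrix.diagonal_apply]
  split_ifs with h
  · simp only [Function.update_self, Function.update_of_ne hij.symm, Pi.mul_apply, Pi.pow_apply]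
    exact scalarA m hm (x i) (x j)
  · rfl

lemma X_mul_CSninv_self {m n : ℕ} (hm : 0 < m) {i j : Fin n} (hij : i ≠ j) :
    Xn n i * CSninv m n i j = CSn m n i j * (Tn m n j ^ (2*(m-1)) * Xn n i) := by
  rw [CSninv, X_mul_diag, CSn, Tn, Matrix.diagonal_pow, ← mul_assoc,
    Matrix.diagonal_mul_diagonal]
  congr 1
  ext x y
  simp only [Matrix.diagonal_apply]
  split_ifs with h
  · simp only [Function.update_self, Function.update_of_ne hij.symm, Pi.mul_apply, Pi.pow_apply]
    exact scalarB m hm (x i) (x j)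
  · rfl

def csMat (m : ℕ) {n : ℕ} (b : Bool) (i j : Fin n) :
    Matrix (Fin n → ZMod 2) (Fin n → ZMod 2) ℂ :=
  if b then CSn m n i j else CSninv m n i j

lemma diag_comm {α : Type*} [DecidableEq α] [Fintype α] (d e : α → ℂ) :
    Matrix.diagonal d * Matrix.diagonal e = Matrix.diagonal e * Matrix.diagonal d := by
  rw [Matrix.diagonal_mul_diagonal, Matrix.diagonal_mul_diagonal]
  exact congrArg Matrix.diagonal (funext fun x => mul_comm _ _)

lemma T_comm_csMat {m n : ℕ} (k : Fin n) (l : ℕ) (b : Bool) (i j : Fin n) :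
    Tn m n k ^ l * csMat m b i j = csMat m b i j * Tn m n k ^ l := by
  rw [Tn, Matrix.diagonal_pow]
  cases b <;> simp only [csMat, if_true, if_false, CSn, CSninv, Bool.false_eq_true] <;>
    exact diag_comm _ _

lemma push_one {m n : ℕ} (hm : 0 < m) (g : GateCS n) (hg : g.isCS = false)
    (b : Bool) (i j : Fin n) (hij : i ≠ j) :
    ∃ (b' : Bool) (L : List (GateCS n)), L.countP (fun g => g.isCS) = 0 ∧
      g.toMatrix m * csMat m b i j = csMat m b' i j * (L.map (GateCS.toMatrix m)).prod := by
  cases g with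
  | X k =>
    by_cases hki : k = i
    · subst hki
      cases b with
      | true =>
        refine ⟨false, [.Tpow j 2, .X k], rfl, ?_⟩
        simp only [csMat, if_true, if_false, GateCS.toMatrix, List.map_cons, List.map_nil,
          List.prod_cons, List.prod_nil, mul_one, Bool.false_eq_true]
        exact X_mul_CSn_self hm hij
      | false =>
        refine ⟨true, [.Tpow j (2*(m-1)), .X k], rfl, ?_⟩
        simp only [csMat, if_true, if_false, GateCS.toMatrix, List.map_cons, List.map_nil,
          List.prod_cons, List.prod_nil, mul_one, Bool.false_eq_true]
        exact X_mul_CSninv_self hm hij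
    · by_cases hkj : k = j
      · subst hkj
        cases b with
        | true =>
          refine ⟨false, [.Tpow i 2, .X k], rfl, ?_⟩
          simp only [csMat, if_true, if_false, GateCS.toMatrix, List.map_cons, List.map_nil,
            List.prod_cons, List.prod_nil, mul_one, Bool.false_eq_true]
          rw [csn_symm m n i k, csninv_symm m n i k]
          exact X_mul_CSn_self hm (Ne.symm hij)
        | false =>
          refine ⟨true, [.Tpow i (2*(m-1)), .X k], rfl, ?_⟩
          simp only [csMat, if_true, if_false, GateCS.toMatrix, List.map_cons, List.map_nil,
            List.prod_cons, List.prod_nil, mul_one, Bool.false_eq_true]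
          rw [csn_symm m n i k, csninv_symm m n i k]
          exact X_mul_CSninv_self hm (Ne.symm hij)
      · refine ⟨b, [.X k], rfl, ?_⟩
        simp only [GateCS.toMatrix, List.map_cons, List.map_nil, List.prod_cons,
          List.prod_nil, mul_one]
        cases b <;> simp only [csMat, if_true, if_false, Bool.false_eq_true]
        · exact X_comm_CSninv hki hkj
        · exact X_comm_CSn hki hkj
  | Tpow k l =>
    refine ⟨b, [.Tpow k l], rfl, ?_⟩
    simp only [GateCS.toMatrix, List.map_cons, List.map_nil, List.prod_cons,
      List.prod_nil, mul_one]
    exact T_comm_csMat k l b i j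
  | CS i' j' h => simp [GateCS.isCS] at hg
  | CSinv i' j' h => simp [GateCS.isCS] at hg

lemma extract {m n : ℕ} (hm : 0 < m) (L : List (GateCS n)) (r : ℕ)
    (h : L.countP (fun g => g.isCS) = r + 1) :
    ∃ (b : Bool) (i j : Fin n), i ≠ j ∧ ∃ W ∈ Hset m n r,
      (L.map (GateCS.toMatrix m)).prod = csMat m b i j * W := by
  induction L generalizing r with
  | nil => simp at h
  | cons g t ih =>
    by_cases hg : g.isCS = true
    · cases g with
      | CS i j hij =>
        rw [List.countP_cons_of_pos (by simp [GateCS.isCS])] at h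
        refine ⟨true, i, j, hij, (t.map (GateCS.toMatrix m)).prod,
          ⟨t, rfl, by omega⟩, ?_⟩
        simp only [List.map_cons, List.prod_cons, csMat, if_true, GateCS.toMatrix]
      | CSinv i j hij =>
        rw [List.countP_cons_of_pos (by simp [GateCS.isCS])] at h
        refine ⟨false, i, j, hij, (t.map (GateCS.toMatrix m)).prod,
          ⟨t, rfl, by omega⟩, ?_⟩
        simp only [List.map_cons, List.prod_cons, csMat, if_false, GateCS.toMatrix,
          Bool.false_eq_true]
      | X k => simp [GateCS.isCS] at hg
      | Tpow k l => simp [GateCS.isCS] at hg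
    · rw [List.countP_cons_of_neg (by simpa using hg)] at h
      obtain ⟨b, i, j, hij, W, ⟨Lw, hLw, hcw⟩, heq⟩ := ih r h
      obtain ⟨b', L₀, hc0, hpush⟩ := push_one hm g (by simpa using hg) b i j hij
      refine ⟨b', i, j, hij, (L₀.map (GateCS.toMatrix m)).prod * W,
        ⟨L₀ ++ Lw, ?_, ?_⟩, ?_⟩
      · rw [List.map_append, List.prod_append, hLw]
      · rw [List.countP_append, hc0, hcw, zero_add]
      · rw [List.map_cons, List.prod_cons, heq, ← mul_assoc, hpush, mul_assoc]

def Mono (m n : ℕ) : Set (Matrix (Fin n → ZMod 2) (Fin n → ZMod 2) ℂ) :=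
  {M | ∃ (σ : Equiv.Perm (Fin n → ZMod 2)) (d : (Fin n → ZMod 2) → ℂ),
    (∀ x, d x ^ m = 1) ∧ M = Matrix.of fun x y => if x = σ y then d y else 0}

lemma diagonal_mem_mono {m n : ℕ} (f : (Fin n → ZMod 2) → ℂ) (hf : ∀ x, f x ^ m = 1) :
    Matrix.diagonal f ∈ Mono m n := by
  refine ⟨Equiv.refl _, f, hf, ?_⟩
  ext x y
  simp only [Matrix.diagonal_apply, Matrix.of_apply, Equiv.refl_apply]
  split_ifs with h
  · subst h; simp
  · simp [h]

lemma one_mem_mono {m n : ℕ} :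
    (1 : Matrix (Fin n → ZMod 2) (Fin n → ZMod 2) ℂ) ∈ Mono m n := by
  rw [← Matrix.diagonal_one]
  exact diagonal_mem_mono _ (fun x => one_pow m)

lemma pow_exp_mem {m : ℕ} (w : ℂ) (hw : w ^ m = 1) (e : ℕ) : (w ^ e) ^ m = 1 := by
  rw [← pow_mul, mul_comm, pow_mul, hw, one_pow]

lemma gate_mem_mono {m n : ℕ} (hm : 0 < m) (g : GateCS n) : g.toMatrix m ∈ Mono m n := by
  have hω := omega_pow_m m hm
  have hωinv : (omega m)⁻¹ ^ m = 1 := by rw [inv_pow, hω, inv_one]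
  cases g with
  | X i =>
    refine ⟨(flip_invol n i).toPerm _, 1, fun x => one_pow m, ?_⟩
    rfl
  | Tpow i l =>
    show Tn m n i ^ l ∈ Mono m n
    rw [Tn, Matrix.diagonal_pow]
    refine diagonal_mem_mono _ fun x => ?_
    simp only [Pi.pow_apply]
    exact pow_exp_mem _ (pow_exp_mem _ hω _) l
  | CS i j h => exact diagonal_mem_mono _ fun x => pow_exp_mem _ hω _
  | CSinv i j h => exact diagonal_mem_mono _ fun x => pow_exp_mem _ hωinv _

lemma mono_mul {m n : ℕ} {M N : Matrix (Fin n → ZMod 2) (Fin n → ZMod 2) ℂ}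
    (hM : M ∈ Mono m n) (hN : N ∈ Mono m n) : M * N ∈ Mono m n := by
  obtain ⟨σ, d, hd, rfl⟩ := hM
  obtain ⟨τ, e, he, rfl⟩ := hN
  refine ⟨τ.trans σ, fun y => d (τ y) * e y, fun y => by rw [mul_pow, hd, he, one_mul], ?_⟩
  ext x y
  rw [Matrix.mul_apply, Finset.sum_eq_single (τ y)]
  · simp only [Matrix.of_apply, if_pos rfl, Equiv.trans_apply]
    by_cases h : x = σ (τ y) <;> simp [h]
  · intro z _ hz
    simp only [Matrix.of_apply, if_neg hz, mul_zero]
  · intro h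
    exact absurd (Finset.mem_univ _) h

lemma prod_mem_mono {m n : ℕ} (hm : 0 < m) (L : List (GateCS n)) :
    (L.map (GateCS.toMatrix m)).prod ∈ Mono m n := by
  induction L with
  | nil => exact one_mem_mono
  | cons g t ih =>
    rw [List.map_cons, List.prod_cons]
    exact mono_mul (gate_mem_mono hm g) ih

lemma mono_finite (m n : ℕ) (hm : 0 < m) : (Mono m n).Finite := by
  have hroots : {z : ℂ | z ^ m = 1}.Finite := by
    apply Set.Finite.subset (Polynomial.nthRoots m (1:ℂ)).toFinset.finite_toSet
    intro z hz
    simp only [Finset.mem_coe, Multiset.mem_toFinset]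
    exact (Polynomial.mem_nthRoots hm).mpr hz
  haveI := hroots.to_subtype
  have hsub : Mono m n ⊆ Set.range (fun p : Equiv.Perm (Fin n → ZMod 2) ×
      ((Fin n → ZMod 2) → {z : ℂ // z ∈ {z : ℂ | z ^ m = 1}}) =>
      Matrix.of fun x y => if x = p.1 y then (p.2 y : ℂ) else 0) := by
    rintro M ⟨σ, d, hd, rfl⟩
    exact ⟨(σ, fun x => ⟨d x, hd x⟩), rfl⟩
  exact Set.Finite.subset (Set.finite_range _) hsub

lemma hset_finite (m n r : ℕ) (hm : 0 < m) : (Hset m n r).Finite := by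
  apply Set.Finite.subset (mono_finite m n hm)
  rintro U ⟨L, rfl, -⟩
  exact prod_mem_mono hm L

lemma csMat_mul_mem {m n r : ℕ} (b : Bool) {i j : Fin n} (hij : i ≠ j)
    {V : Matrix (Fin n → ZMod 2) (Fin n → ZMod 2) ℂ} (hV : V ∈ Hset m n r) :
    csMat m b i j * V ∈ Hset m n (r + 1) := by
  obtain ⟨L, hL, hc⟩ := hV
  refine ⟨(if b then GateCS.CS i j hij else GateCS.CSinv i j hij) :: L, ?_, ?_⟩
  · rw [List.map_cons, List.prod_cons, hL]
    cases b <;> simp [csMat, GateCS.toMatrix]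
  · rw [List.countP_cons_of_pos (by cases b <;> simp [GateCS.isCS]), hc]

lemma phase_mul_left {α : Type*} [Fintype α] (A U V : Matrix α α ℂ) (h : PhaseEq U V) :
    PhaseEq (A * U) (A * V) := by
  obtain ⟨c, hc, rfl⟩ := h
  exact ⟨c, hc, by rw [Matrix.mul_smul]⟩

lemma card_offdiag (n : ℕ) :
    Nat.card {p : Fin n × Fin n // p.1 ≠ p.2} = n ^ 2 - n := by
  rw [Nat.card_eq_fintype_card]
  have h1 : Fintype.card {p : Fin n × Fin n // p.1 = p.2} = n := by
    have e : {p : Fin n × Fin n // p.1 = p.2} ≃ Fin n :=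
      { toFun := fun p => p.1.1
        invFun := fun i => ⟨(i, i), rfl⟩
        left_inv := by rintro ⟨⟨a, b⟩, h⟩; cases h; rfl
        right_inv := fun i => rfl }
    rw [Fintype.card_congr e, Fintype.card_fin]
  calc Fintype.card {p : Fin n × Fin n // p.1 ≠ p.2}
      = Fintype.card (Fin n × Fin n) - Fintype.card {p : Fin n × Fin n // p.1 = p.2} :=
        Fintype.card_subtype_compl _
    _ = n ^ 2 - n := by rw [h1, Fintype.card_prod, Fintype.card_fin, sq]

theorem H_succ_card_bound (m n : ℕ) (hm : 0 < m) (hn : 0 < n) (r : ℕ) :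
    Nat.card (Quot (fun (U V : Hset m n (r + 1)) => PhaseEq U.1 V.1)) ≤
      (n ^ 2 - n) * Nat.card (Quot (fun (U V : Hset m n r) => PhaseEq U.1 V.1)) := by
  classical
  haveI : Finite (Hset m n r) := ((hset_finite m n r hm).to_subtype)
  set rel₀ := fun (U V : Hset m n r) => PhaseEq U.1 V.1 with hrel₀
  set rel₁ := fun (U V : Hset m n (r+1)) => PhaseEq U.1 V.1 with hrel₁
  haveI : Finite (Quot rel₀) := Finite.of_surjective (Quot.mk rel₀)
    (fun q => Quot.exists_rep q)
  set S := {p : Fin n × Fin n // p.1 ≠ p.2} with hS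
  have key : ∀ (s : S) (V : Hset m n r),
      csMat m (decide (s.1.1 < s.1.2)) s.1.1 s.1.2 * V.1 ∈ Hset m n (r+1) :=
    fun s V => csMat_mul_mem _ s.2 V.2
  let F : S × Quot rel₀ → Quot rel₁ := fun sq =>
    Quot.lift
      (fun V : Hset m n r =>
        Quot.mk rel₁ ⟨csMat m (decide (sq.1.1.1 < sq.1.1.2)) sq.1.1.1 sq.1.1.2 * V.1,
          key sq.1 V⟩)
      (fun V₁ V₂ h => Quot.sound (phase_mul_left _ _ _ h)) sq.2
  have hsurj : Function.Surjective F := by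
    intro q
    obtain ⟨⟨U, hU⟩, rfl⟩ := Quot.exists_rep q
    have hU2 := hU
    obtain ⟨L, hL, hc⟩ := hU2
    obtain ⟨b, i, j, hij, W, hW, heq⟩ := extract hm L r hc
    -- choose the pair
    have hval : ∀ s : S, csMat m (decide (s.1.1 < s.1.2)) s.1.1 s.1.2 = csMat m b i j →
        F (s, Quot.mk rel₀ ⟨W, hW⟩) = Quot.mk rel₁ ⟨U, hU⟩ := by
      intro s hs
      show Quot.mk rel₁ _ = Quot.mk rel₁ _
      congr 1
      apply Subtype.ext
      show csMat m (decide (s.1.1 < s.1.2)) s.1.1 s.1.2 * W = U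
      rw [hs, ← heq, hL]
    cases b with
    | true =>
      by_cases hlt : i < j
      · refine ⟨(⟨(i, j), hij⟩, Quot.mk rel₀ ⟨W, hW⟩), hval _ ?_⟩
        simp only [decide_eq_true hlt]
      · have hlt' : j < i := lt_of_le_of_ne (not_lt.mp hlt) (Ne.symm hij)
        refine ⟨(⟨(j, i), hij.symm⟩, Quot.mk rel₀ ⟨W, hW⟩), hval _ ?_⟩
        simp only [decide_eq_true hlt', csMat, if_true]
        exact csn_symm m n j i
    | false =>
      by_cases hlt : i < j
      · refine ⟨(⟨(j, i), hij.symm⟩, Quot.mk rel₀ ⟨W, hW⟩), hval _ ?_⟩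
        simp only [decide_eq_false (not_lt.mpr hlt.le), csMat, if_false, Bool.false_eq_true]
        exact csninv_symm m n j i
      · refine ⟨(⟨(i, j), hij⟩, Quot.mk rel₀ ⟨W, hW⟩), hval _ ?_⟩
        simp only [decide_eq_false hlt]
  calc Nat.card (Quot rel₁) ≤ Nat.card (S × Quot rel₀) :=
        Nat.card_le_card_of_surjective F hsurj
    _ = Nat.card S * Nat.card (Quot rel₀) := Nat.card_prod _ _
    _ = (n ^ 2 - n) * Nat.card (Quot rel₀) := by rw [card_offdiag n]

end
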